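/- Let D be an integral domain, Θ a nonempty subset of Spec(D), and for each P ∈ Θ let Δ_P ⊆ Spec(D_P) define the spectral semistar operation *_P on D_P. Then the semistar operation ∧_Θ on D defined by E^{∧_Θ} := ∩{(E D_P)^{*_P} | P ∈ Θ} is the spectral semistar operation defined by the set Δ := ∪{ {Q ∈ Spec(D) | Q D_P ∈ Δ_P} | P ∈ Θ }, i.e. E^{∧_Θ} = ∩{E D_Q | Q ∈ Δ} for every nonzero D-submodule E of K. -/

import Mathlib

open Pointwise

section Preamble

variable (D : Type*) [CommRing D] [IsDomain D]
variable (K : Type*) [Field K] [Algebra D K] [IsFractionRing D K]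

/-- The localization `D_P` of `D` at a prime `P`, as a subalgebra of the quotient field. -/
noncomputable def locAt (P : Ideal D) (hP : P.IsPrime) : Subalgebra D K :=
  Localization.subalgebra K P.primeCompl
    (fun x hx => mem_nonZeroDivisors_of_ne_zero (fun h0 : x = 0 => hx (h0 ▸ P.zero_mem)))

/-- `D_P` as a `D`-submodule of the quotient field. -/
noncomputable def locAtM (P : Ideal D) (hP : P.IsPrime) : Submodule D K :=
  Subalgebra.toSubmodule (locAt D K P hP)

variable {D K}

/-- `E` is finitely generated as a module over the subring corresponding to `Rm`. -/
def IsRFG (Rm E : Submodule D K) : Prop :=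
  ∃ F₀ : Submodule D K, F₀.FG ∧ F₀ ≠ ⊥ ∧ E = F₀ * Rm

/-- `s` is a semistar operation on the subring corresponding to `Rm`
(on `D` itself when `Rm = 1`): it is defined on the nonzero `Rm`-submodules of `K`. -/
def IsSemistar (Rm : Submodule D K) (s : Submodule D K → Submodule D K) : Prop :=
  (∀ E, E ≠ ⊥ → Rm * E ≤ E → Rm * s E ≤ s E) ∧
  (∀ (x : K) (E), x ≠ 0 → E ≠ ⊥ → Rm * E ≤ E → s (x • E) = x • s E) ∧
  (∀ E F, E ≠ ⊥ → F ≠ ⊥ → Rm * E ≤ E → Rm * F ≤ F → E ≤ F → s E ≤ s F) ∧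
  (∀ E, E ≠ ⊥ → Rm * E ≤ E → E ≤ s E) ∧
  (∀ E, E ≠ ⊥ → Rm * E ≤ E → s (s E) = s E)

/-- `s` is of finite type. -/
def IsFiniteType (Rm : Submodule D K) (s : Submodule D K → Submodule D K) : Prop :=
  ∀ E, E ≠ ⊥ → Rm * E ≤ E → s E = sSup {G | ∃ F, IsRFG Rm F ∧ F ≤ E ∧ G = s F}

/-- `s` is a.b. -/
def IsAB (Rm : Submodule D K) (s : Submodule D K → Submodule D K) : Prop :=
  ∀ F G H : Submodule D K, IsRFG Rm F → G ≠ ⊥ → Rm * G ≤ G → H ≠ ⊥ → Rm * H ≤ H →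
    s (F * G) ≤ s (F * H) → s G ≤ s H

/-- `s` is e.a.b. -/
def IsEAB (Rm : Submodule D K) (s : Submodule D K → Submodule D K) : Prop :=
  ∀ F G H : Submodule D K, IsRFG Rm F → IsRFG Rm G → IsRFG Rm H →
    s (F * G) ≤ s (F * H) → s G ≤ s H

/-- `s` is stable. -/
def IsStable (Rm : Submodule D K) (s : Submodule D K → Submodule D K) : Prop :=
  ∀ E F, E ≠ ⊥ → F ≠ ⊥ → Rm * E ≤ E → Rm * F ≤ F → s (E ⊓ F) = s E ⊓ s F

/-- The divisorial closure `E ↦ (R : (R : E))` over the subring corresponding to `Rm`. -/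
def vOp (Rm E : Submodule D K) : Submodule D K := Rm / (Rm / E)

/-- The `t`-operation over the subring corresponding to `Rm`. -/
def tOp (Rm E : Submodule D K) : Submodule D K :=
  sSup {G | ∃ F, IsRFG Rm F ∧ F ≤ E ∧ G = vOp Rm F}

end Preamble

variable {D : Type*} [CommRing D] [IsDomain D]
variable {K : Type*} [Field K] [Algebra D K] [IsFractionRing D K]

/-- the wedge of a family of spectral semistar operations `*_P` (defined by
sets `Δ P` of primes contained in `P`, for `P ∈ Θ`) is the spectral semistar operation
defined by the union of the `Δ̇_P`. -/
theorem stmt15 (Θ : Set (PrimeSpectrum D)) (hne : Θ.Nonempty)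
    (Δ : PrimeSpectrum D → Set (PrimeSpectrum D)) (hΔne : ∀ P ∈ Θ, (Δ P).Nonempty)
    (hΔ : ∀ P ∈ Θ, ∀ Q ∈ Δ P, Q.asIdeal ≤ P.asIdeal)
    (E : Submodule D K) (hE : E ≠ ⊥) :
    (⨅ P ∈ Θ, ⨅ Q ∈ Δ P,
        (E * locAtM D K P.asIdeal P.isPrime) * locAtM D K Q.asIdeal Q.isPrime) =
      ⨅ Q ∈ ⋃ P ∈ Θ, Δ P, E * locAtM D K Q.asIdeal Q.isPrime := by
  have hloc : ∀ P Q : PrimeSpectrum D, Q.asIdeal ≤ P.asIdeal →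
      locAtM D K P.asIdeal P.isPrime ≤ locAtM D K Q.asIdeal Q.isPrime := by
    intro P Q h x hx
    obtain ⟨a, s, hs, rfl⟩ := hx
    exact ⟨a, s, fun hsQ => hs (h hsQ), rfl⟩
  have hone : ∀ Q : PrimeSpectrum D, (1 : Submodule D K) ≤ locAtM D K Q.asIdeal Q.isPrime := by
    intro Q
    exact Submodule.one_le.2 (locAt D K Q.asIdeal Q.isPrime).one_mem
  have key : ∀ P Q : PrimeSpectrum D, Q.asIdeal ≤ P.asIdeal →
      (E * locAtM D K P.asIdeal P.isPrime) * locAtM D K Q.asIdeal Q.isPrime =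
        E * locAtM D K Q.asIdeal Q.isPrime := by
    intro P Q h
    refine le_antisymm ?_ ?_
    · calc (E * locAtM D K P.asIdeal P.isPrime) * locAtM D K Q.asIdeal Q.isPrime
          ≤ (E * locAtM D K Q.asIdeal Q.isPrime) * locAtM D K Q.asIdeal Q.isPrime :=
            mul_le_mul_left (mul_le_mul_right (hloc P Q h) E) _
        _ = E * (locAtM D K Q.asIdeal Q.isPrime * locAtM D K Q.asIdeal Q.isPrime) := mul_assoc _ _ _
        _ = E * locAtM D K Q.asIdeal Q.isPrime := by
            rw [show locAtM D K Q.asIdeal Q.isPrime * locAtM D K Q.asIdeal Q.isPrime =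
              locAtM D K Q.asIdeal Q.isPrime from (Subalgebra.isIdempotentElem_toSubmodule _).eq]
    · calc E * locAtM D K Q.asIdeal Q.isPrime
          = (E * 1) * locAtM D K Q.asIdeal Q.isPrime := by rw [mul_one]
        _ ≤ (E * locAtM D K P.asIdeal P.isPrime) * locAtM D K Q.asIdeal Q.isPrime :=
            mul_le_mul_left (mul_le_mul_right (hone P) E) _
  rw [show (⋃ P ∈ Θ, Δ P) = ⋃ P : Θ, Δ P by simp [Set.iUnion_subtype], iInf_iUnion]
  rw [iInf_subtype']
  exact iInf_congr fun P => iInf_congr fun Q => iInf_congr fun hQ => key P Q (hΔ P P.2 Q hQ)
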